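/- If T is the tile of a weakly robust periodic solution with temporal period τ, then every column of T, viewed as a word of length τ, is aperiodic, i.e., has minimal period exactly τ. -/

import Mathlib

open Filter

/-- An `n`-state 2-neighbor cellular automaton rule. -/
abbrev CARule (n : ℕ) := Fin n → Fin n → Fin n

/-- One step of the CA evolution: `ξ_{t+1}(x) = f(ξ_t(x-1), ξ_t(x))`. -/
def caStep {n : ℕ} (f : CARule n) (ξ : ℤ → Fin n) : ℤ → Fin n :=
  fun x => f (ξ (x - 1)) (ξ x)

/-- The trajectory of an initial configuration under the rule `f`. -/
def caTraj {n : ℕ} (f : CARule n) (ξ : ℤ → Fin n) : ℕ → ℤ → Fin n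
  | 0 => ξ
  | t + 1 => caStep f (caTraj f ξ t)

/-- `ξ` is (the initial configuration of) a periodic solution of `f` with
minimal temporal period `τ` and minimal spatial period `σ`. -/
def IsPS {n : ℕ} (f : CARule n) (ξ : ℤ → Fin n) (τ σ : ℕ) : Prop :=
  0 < τ ∧ 0 < σ ∧
  (∀ x : ℤ, ξ (x + (σ : ℤ)) = ξ x) ∧
  (∀ σ' : ℕ, 0 < σ' → (∀ x : ℤ, ξ (x + (σ' : ℤ)) = ξ x) → σ ≤ σ') ∧
  caTraj f ξ τ = ξ ∧
  (∀ τ' : ℕ, 0 < τ' → caTraj f ξ τ' = ξ → τ ≤ τ')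

/-- `η` is a proper initial configuration for the periodic solution `ξ`:
it agrees with `ξ` at all sites `≤ y` for some `y`. -/
def IsProper {n : ℕ} (ξ η : ℤ → Fin n) : Prop :=
  ∃ y : ℤ, ∀ x ≤ y, η x = ξ x

/-- The periodic solution `ξ` of `f` is weakly robust: the expansion velocity is
positive, i.e. there is `v > 0` such that for every proper initial configuration
`η`, eventually (in `t`) the two trajectories agree at all sites `x ≤ v·t`
(equivalently, `inf_η liminf_t s_t(η)/t > 0`). -/
def IsWeaklyRobust {n : ℕ} (f : CARule n) (ξ : ℤ → Fin n) : Prop :=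
  ∃ v : ℝ, 0 < v ∧ ∀ η : ℤ → Fin n, IsProper ξ η →
    ∀ᶠ t : ℕ in atTop, ∀ x : ℤ, (x : ℝ) ≤ v * t → caTraj f η t x = caTraj f ξ t x

/-- The label (τ-periodic sequence) `A` right-extends to `B` under `f`: `A → B`. -/
def RightExtends {n : ℕ} (f : CARule n) (A B : ℕ → Fin n) : Prop :=
  ∀ i : ℕ, f (A i) (B i) = B (i + 1)

/-- The sequence `c_{j+1} = f(a_j, c_j)` started at `c₀`. -/
def chaseSeq {n : ℕ} (f : CARule n) (A : ℕ → Fin n) (c₀ : Fin n) : ℕ → Fin n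
  | 0 => c₀
  | j + 1 => f (A j) (chaseSeq f A c₀ j)

/-- The label `A` decides `B` under `f`: `A ⇒ B`. -/
def Decides {n : ℕ} (f : CARule n) (A B : ℕ → Fin n) : Prop :=
  RightExtends f A B ∧ ∀ c₀ : Fin n, ∃ j : ℕ, chaseSeq f A c₀ j = B j

/-- `T` is a (τ,σ)-periodic array (row index mod τ, column index mod σ). -/
def IsTilePeriodic {n : ℕ} (τ σ : ℕ) (T : ℕ → ℕ → Fin n) : Prop :=
  (∀ i j, T (i + τ) j = T i j) ∧ (∀ i j, T i (j + σ) = T i j)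

/-- The set of states appearing in the tile `T`. -/
def tileStates (n τ σ : ℕ) (T : ℕ → ℕ → Fin n) : Finset (Fin n) :=
  (Finset.range τ ×ˢ Finset.range σ).image fun p => T p.1 p.2

/-- The set of horizontally adjacent pairs appearing in the tile `T`. -/
def tilePairs (n τ σ : ℕ) (T : ℕ → ℕ → Fin n) : Finset (Fin n × Fin n) :=
  (Finset.range τ ×ˢ Finset.range σ).image fun p => (T p.1 p.2, T p.1 (p.2 + 1))

/-- `T` is a tile of a periodic solution: uniqueness of assignment, each row has
minimal period `σ`, and the cyclic sequence of rows has minimal period `τ`. -/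
def IsPSTile (n τ σ : ℕ) (T : ℕ → ℕ → Fin n) : Prop :=
  IsTilePeriodic τ σ T ∧
  (∀ i j k m, T i j = T k m → T i (j + 1) = T k (m + 1) →
      T (i + 1) (j + 1) = T (k + 1) (m + 1)) ∧
  (∀ i : ℕ, ∀ σ' : ℕ, 0 < σ' → (∀ j, T i (j + σ') = T i j) → σ ≤ σ') ∧
  (∀ τ' : ℕ, 0 < τ' → (∀ i j, T (i + τ') j = T i j) → τ ≤ τ')

/-- `T` is a tile of a periodic solution of the given rule `f`. -/
def IsPSTileOf {n : ℕ} (f : CARule n) (τ σ : ℕ) (T : ℕ → ℕ → Fin n) : Prop :=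
  IsTilePeriodic τ σ T ∧
  (∀ i j, f (T i j) (T i (j + 1)) = T (i + 1) (j + 1)) ∧
  (∀ i : ℕ, ∀ σ' : ℕ, 0 < σ' → (∀ j, T i (j + σ') = T i j) → σ ≤ σ') ∧
  (∀ τ' : ℕ, 0 < τ' → (∀ i j, T (i + τ') j = T i j) → τ ≤ τ')

/-- `T` is simple: the assignment number `p(T)` equals the number of states `s(T)`. -/
def IsSimpleTile (n τ σ : ℕ) (T : ℕ → ℕ → Fin n) : Prop :=
  (tilePairs n τ σ T).card = (tileStates n τ σ T).card

/-- The rank of a tile: the largest `x` such that some `x` columns of `T`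
together contain `x * τ` pairwise distinct states. -/
noncomputable def tileRank (n τ σ : ℕ) (T : ℕ → ℕ → Fin n) : ℕ :=
  sSup {x : ℕ | ∃ J : Finset ℕ, J ⊆ Finset.range σ ∧ J.card = x ∧
    ((J ×ˢ Finset.range τ).image fun p => T p.2 p.1).card = x * τ}

/-- The tile of the periodic solution `ξ` of `f`: `a_{i,j} = ξ_i(j)`. -/
def psTile {n : ℕ} (f : CARule n) (ξ : ℤ → Fin n) : ℕ → ℕ → Fin n :=
  fun i j => caTraj f ξ i (j : ℤ)

lemma caTraj_add {n : ℕ} (f : CARule n) (ξ : ℤ → Fin n) (a b : ℕ) :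
    caTraj f ξ (a + b) = caTraj f (caTraj f ξ a) b := by
  induction b with
  | zero => rfl
  | succ b ih =>
    show caTraj f ξ (a + b + 1) = _
    rw [show caTraj f ξ (a + b + 1) = caStep f (caTraj f ξ (a + b)) from rfl, ih]
    rfl

lemma caTraj_mul {n : ℕ} (f : CARule n) (ξ : ℤ → Fin n) (τ : ℕ)
    (h : caTraj f ξ τ = ξ) : ∀ k : ℕ, caTraj f ξ (k * τ) = ξ := by
  intro k
  induction k with
  | zero => rw [Nat.zero_mul]; rfl
  | succ k ih =>
    rw [Nat.succ_mul, caTraj_add, ih, h]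

lemma caTraj_spatial {n : ℕ} (f : CARule n) (ξ : ℤ → Fin n) (σ : ℕ)
    (h : ∀ x : ℤ, ξ (x + (σ : ℤ)) = ξ x) :
    ∀ t : ℕ, ∀ x : ℤ, caTraj f ξ t (x + (σ : ℤ)) = caTraj f ξ t x := by
  intro t
  induction t with
  | zero => exact h
  | succ t ih =>
    intro x
    show f (caTraj f ξ t (x + σ - 1)) (caTraj f ξ t (x + σ)) = _
    rw [show x + (σ : ℤ) - 1 = (x - 1) + σ by ring, ih, ih]
    rfl

lemma periodic_int_ext {n : ℕ} (g : ℤ → Fin n) (σ : ℕ)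
    (h : ∀ x : ℤ, g (x + (σ : ℤ)) = g x) :
    ∀ (k : ℤ) (x : ℤ), g (x + k * σ) = g x := by
  intro k
  induction k using Int.induction_on with
  | zero => intro x; simp
  | succ k ih =>
    intro x
    rw [show x + ((k : ℤ) + 1) * σ = (x + k * σ) + σ by ring, h, ih]
  | pred k ih =>
    intro x
    have h2 := h (x + (-(k : ℤ) - 1) * σ)
    rw [show x + (-(k : ℤ) - 1) * σ + σ = x + (-(k : ℤ)) * σ by ring] at h2
    rw [← h2, ih]

/-- every column of the tile of a weakly robust periodic solution
with temporal period `τ` is aperiodic, i.e. has minimal period exactly `τ`. -/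
theorem wrps_columns_aperiodic {n : ℕ} (f : CARule n) (ξ : ℤ → Fin n)
    (τ σ : ℕ) (hPS : IsPS f ξ τ σ) (hWR : IsWeaklyRobust f ξ) :
    ∀ x : ℤ, ∀ τ' : ℕ, 0 < τ' →
      (∀ t : ℕ, caTraj f ξ (t + τ') x = caTraj f ξ t x) → τ ≤ τ' := by
  obtain ⟨hτ, hσ, hspat, _hσmin, htemp, hτmin⟩ := hPS
  intro x τ' hτ' hcol
  -- the modified proper initial configuration
  set η : ℤ → Fin n := fun y => if y ≤ x then ξ y else caTraj f ξ τ' y with hη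
  -- the key invariant
  have key : ∀ t : ℕ,
      (∀ y : ℤ, y ≤ x → caTraj f η t y = caTraj f ξ t y) ∧
      (∀ y : ℤ, x ≤ y → caTraj f η t y = caTraj f ξ (t + τ') y) := by
    intro t
    induction t with
    | zero =>
      constructor
      · intro y hy
        show η y = ξ y
        simp [hη, hy]
      · intro y hy
        show η y = caTraj f ξ (0 + τ') y
        rw [Nat.zero_add]
        by_cases hyx : y ≤ x
        · have hxy : y = x := le_antisymm hyx hy
          subst hxy
          have h0 := hcol 0
          rw [Nat.zero_add] at h0
          simp only [hη, if_pos hyx]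
          exact h0.symm
        · simp [hη, hyx]
    | succ t ih =>
      have left : ∀ y : ℤ, y ≤ x → caTraj f η (t + 1) y = caTraj f ξ (t + 1) y := by
        intro y hy
        show f (caTraj f η t (y - 1)) (caTraj f η t y) = f (caTraj f ξ t (y - 1)) (caTraj f ξ t y)
        rw [ih.1 (y - 1) (by omega), ih.1 y hy]
      refine ⟨left, ?_⟩
      intro y hy
      by_cases hyx : y = x
      · subst hyx
        rw [left y le_rfl, ← hcol (t + 1)]
      · have hxy : x ≤ y - 1 := by omega
        show f (caTraj f η t (y - 1)) (caTraj f η t y) = caTraj f ξ (t + 1 + τ') y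
        rw [ih.2 (y - 1) hxy, ih.2 y hy]
        have : t + 1 + τ' = (t + τ') + 1 := by omega
        rw [this]
        rfl
  -- η is proper
  have hproper : IsProper ξ η := ⟨x, fun y hy => by simp [hη, hy]⟩
  obtain ⟨v, hv, hev⟩ := hWR
  have hev' := hev η hproper
  -- eventually v * t is large
  have htend : Filter.Tendsto (fun t : ℕ => v * t) atTop atTop :=
    Filter.Tendsto.const_mul_atTop hv tendsto_natCast_atTop_atTop
  have hbig : ∀ᶠ t : ℕ in atTop, ((x : ℝ) + σ) ≤ v * t :=
    htend.eventually_ge_atTop _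
  obtain ⟨t, ht1, ht2⟩ := (hev'.and hbig).exists
  -- on a spatial period to the right of x, the shifted and unshifted rows agree
  have hrow : ∀ y : ℤ, x + 1 ≤ y → y ≤ x + σ →
      caTraj f ξ (t + τ') y = caTraj f ξ t y := by
    intro y hy1 hy2
    have hyr : (y : ℝ) ≤ v * t := by
      refine le_trans ?_ ht2
      have : (y : ℝ) ≤ (x : ℝ) + (σ : ℝ) := by exact_mod_cast hy2
      exact this
    have h1 := ht1 y hyr
    have h2 := (key t).2 y (by omega)
    rw [← h1, h2]
  -- hence everywhere, by spatial periodicity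
  have hall : ∀ z : ℤ, caTraj f ξ (t + τ') z = caTraj f ξ t z := by
    intro z
    have hσZ : (0 : ℤ) < (σ : ℤ) := by exact_mod_cast hσ
    set r : ℤ := (z - (x + 1)) % (σ : ℤ) with hr
    set k : ℤ := (z - (x + 1)) / (σ : ℤ) with hk
    have hzd : z = (x + 1 + r) + k * σ := by
      have := Int.mul_ediv_add_emod (z - (x + 1)) (σ : ℤ)
      rw [← hr, ← hk] at this
      linarith [this]
    have hr0 : 0 ≤ r := Int.emod_nonneg _ (by omega)
    have hrσ : r < (σ : ℤ) := Int.emod_lt_of_pos _ hσZ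
    have hp1 := periodic_int_ext (caTraj f ξ (t + τ')) σ
      (caTraj_spatial f ξ σ hspat (t + τ')) k (x + 1 + r)
    have hp2 := periodic_int_ext (caTraj f ξ t) σ
      (caTraj_spatial f ξ σ hspat t) k (x + 1 + r)
    rw [hzd, hp1, hp2]
    exact hrow (x + 1 + r) (by omega) (by omega)
  have hfun : caTraj f ξ (t + τ') = caTraj f ξ t := funext hall
  -- propagate forward to a multiple of τ
  have htτ : t ≤ t * τ := Nat.le_mul_of_pos_right t hτ
  have key2 : caTraj f ξ τ' = ξ := by
    obtain ⟨d, hd⟩ := Nat.le.dest htτ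
    have e1 : caTraj f ξ (t * τ + τ') = caTraj f ξ (t * τ) := by
      calc caTraj f ξ (t * τ + τ')
          = caTraj f ξ ((t + τ') + d) := by
            exact congrArg (caTraj f ξ) (by omega)
        _ = caTraj f (caTraj f ξ (t + τ')) d := caTraj_add f ξ _ _
        _ = caTraj f (caTraj f ξ t) d := by rw [hfun]
        _ = caTraj f ξ (t + d) := (caTraj_add f ξ _ _).symm
        _ = caTraj f ξ (t * τ) := by rw [hd]
    have e2 : caTraj f ξ (t * τ) = ξ := caTraj_mul f ξ τ htemp t
    have e3 : caTraj f ξ (t * τ + τ') = caTraj f (caTraj f ξ (t * τ)) τ' :=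
      caTraj_add f ξ _ _
    rw [e2] at e3
    rw [← e3, e1, e2]
  exact hτmin τ' hτ' key2
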